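/- arXiv:2603.07318 — 2 statements merged into one kernel-verified Lean document; each statement's English description precedes it below -/
import Mathlib

section
/- Let g ≥ 0 and n ≥ 1 be integers. For any two points a, b ∈ U_{g,n}, the points a and b lie in the same connected component of U_{g,n} if and only if for every subset J ⊆ {1,…,n} with |J| ≥ 2, one has Σ_{j∈J} a_j < 1 if and only if Σ_{j∈J} b_j < 1. -/
/-- The Hassett domain `D_{g,n} = {a ∈ (0,1]^n : a₁ + ⋯ + aₙ > 2 - 2g}`. -/
def hassettDomain (g n : ℕ) : Set (Fin n → ℝ) :=
  {a | (∀ j, 0 < a j ∧ a j ≤ 1) ∧ (2 : ℝ) - 2 * g < ∑ j, a j}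

/-- The wall `W_J = {a ∈ D_{g,n} : ∑_{j ∈ J} a_j = 1}`. -/
def hassettWall (g n : ℕ) (J : Finset (Fin n)) : Set (Fin n → ℝ) :=
  {a ∈ hassettDomain g n | ∑ j ∈ J, a j = 1}

/-- The complement of the walls `U_{g,n} = D_{g,n} \ ⋃_{|J| ≥ 2} W_J`. -/
def hassettChamberSpace (g n : ℕ) : Set (Fin n → ℝ) :=
  hassettDomain g n \ ⋃ (J : Finset (Fin n)) (_ : 2 ≤ J.card), hassettWall g n J

lemma mem_hassettChamberSpace_iff (g n : ℕ) (x : Fin n → ℝ) :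
    x ∈ hassettChamberSpace g n ↔
      x ∈ hassettDomain g n ∧
        ∀ J : Finset (Fin n), 2 ≤ J.card → ∑ j ∈ J, x j ≠ 1 := by
  constructor
  · rintro ⟨hD, hW⟩
    refine ⟨hD, fun J hJ h1 => hW ?_⟩
    exact Set.mem_iUnion₂.mpr ⟨J, hJ, hD, h1⟩
  · rintro ⟨hD, h⟩
    refine ⟨hD, fun hW => ?_⟩
    obtain ⟨J, hJ, _, h1⟩ := Set.mem_iUnion₂.mp hW
    exact h J hJ h1

lemma sumJ_linear (n : ℕ) (J : Finset (Fin n)) :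
    IsLinearMap ℝ (fun x : Fin n → ℝ => ∑ j ∈ J, x j) :=
  ⟨fun x y => by simp [Finset.sum_add_distrib], fun c x => by simp [Finset.mul_sum]⟩

lemma hassettDomain_convex (g n : ℕ) : Convex ℝ (hassettDomain g n) := by
  have : hassettDomain g n =
      (Set.univ.pi fun _ : Fin n => Set.Ioc (0:ℝ) 1) ∩
        {x : Fin n → ℝ | (2 : ℝ) - 2 * g < ∑ j, x j} := by
    ext x
    simp [hassettDomain, Set.mem_pi, Set.mem_Ioc, and_comm]
  rw [this]
  exact (convex_pi fun _ _ => convex_Ioc 0 1).inter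
    (convex_halfSpace_gt (sumJ_linear n Finset.univ) _)

theorem stmt1 (g n : ℕ) (hn : 1 ≤ n)
    (a b : Fin n → ℝ)
    (ha : a ∈ hassettChamberSpace g n) (hb : b ∈ hassettChamberSpace g n) :
    b ∈ connectedComponentIn (hassettChamberSpace g n) a ↔
      ∀ J : Finset (Fin n), 2 ≤ J.card →
        ((∑ j ∈ J, a j < 1) ↔ (∑ j ∈ J, b j < 1)) := by
  obtain ⟨haD, haW⟩ := (mem_hassettChamberSpace_iff g n a).mp ha
  obtain ⟨hbD, hbW⟩ := (mem_hassettChamberSpace_iff g n b).mp hb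
  constructor
  · intro h J hJ
    set s := connectedComponentIn (hassettChamberSpace g n) a with hs_def
    have hs : IsPreconnected s := isPreconnected_connectedComponentIn
    have hsub : s ⊆ hassettChamberSpace g n := connectedComponentIn_subset _ _
    have has : a ∈ s := mem_connectedComponentIn ha
    set u : Set (Fin n → ℝ) := {x | ∑ j ∈ J, x j < 1} with hu_def
    set v : Set (Fin n → ℝ) := {x | 1 < ∑ j ∈ J, x j} with hv_def
    have hcont : Continuous (fun x : Fin n → ℝ => ∑ j ∈ J, x j) :=
      continuous_finset_sum _ fun j _ => continuous_apply j
    have hu : IsOpen u := isOpen_lt hcont continuous_const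
    have hv : IsOpen v := isOpen_lt continuous_const hcont
    have hcover : s ⊆ u ∪ v := by
      intro x hx
      rcases lt_or_gt_of_ne (((mem_hassettChamberSpace_iff g n x).mp (hsub hx)).2 J hJ) with h1 | h1
      · exact Or.inl h1
      · exact Or.inr h1
    by_contra hne
    have key : (a ∈ u ∧ b ∈ v) ∨ (a ∈ v ∧ b ∈ u) := by
      rcases lt_or_gt_of_ne (haW J hJ) with h1 | h1 <;>
        rcases lt_or_gt_of_ne (hbW J hJ) with h2 | h2
      · exact absurd (iff_of_true h1 h2) hne
      · exact Or.inl ⟨h1, h2⟩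
      · exact Or.inr ⟨h1, h2⟩
      · exact absurd (iff_of_false (not_lt.mpr h1.le) (not_lt.mpr h2.le)) hne
    have hnon : (s ∩ u).Nonempty ∧ (s ∩ v).Nonempty := by
      rcases key with ⟨h1, h2⟩ | ⟨h1, h2⟩
      · exact ⟨⟨a, has, h1⟩, ⟨b, h, h2⟩⟩
      · exact ⟨⟨b, h, h2⟩, ⟨a, has, h1⟩⟩
    obtain ⟨m, hm, hmu, hmv⟩ := hs u v hu hv hcover hnon.1 hnon.2
    simp only [hu_def, hv_def, Set.mem_setOf_eq] at hmu hmv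
    linarith
  · intro h
    set C : Set (Fin n → ℝ) :=
      hassettDomain g n ∩ ⋂ (J : Finset (Fin n)), ⋂ (_ : 2 ≤ J.card),
        {x | if ∑ j ∈ J, a j < 1 then ∑ j ∈ J, x j < 1 else 1 < ∑ j ∈ J, x j}
      with hC_def
    have hconv : Convex ℝ C := by
      refine (hassettDomain_convex g n).inter (convex_iInter fun J => convex_iInter fun _ => ?_)
      split_ifs
      · exact convex_halfSpace_lt (sumJ_linear n J) 1
      · exact convex_halfSpace_gt (sumJ_linear n J) 1
    have hCsub : C ⊆ hassettChamberSpace g n := by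
      rintro x ⟨hxD, hxW⟩
      refine (mem_hassettChamberSpace_iff g n x).mpr ⟨hxD, fun J hJ => ?_⟩
      have := Set.mem_iInter.mp (Set.mem_iInter.mp hxW J) hJ
      simp only [Set.mem_setOf_eq] at this
      split_ifs at this <;> [exact ne_of_lt this; exact ne_of_gt this]
    have haC : a ∈ C := by
      refine ⟨haD, Set.mem_iInter.mpr fun J => Set.mem_iInter.mpr fun hJ => ?_⟩
      simp only [Set.mem_setOf_eq]
      split_ifs with h1
      · exact h1
      · exact lt_of_le_of_ne (not_lt.mp h1) (Ne.symm (haW J hJ))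
    have hbC : b ∈ C := by
      refine ⟨hbD, Set.mem_iInter.mpr fun J => Set.mem_iInter.mpr fun hJ => ?_⟩
      simp only [Set.mem_setOf_eq]
      split_ifs with h1
      · exact (h J hJ).mp h1
      · have : ¬ ∑ j ∈ J, b j < 1 := fun hb1 => h1 ((h J hJ).mpr hb1)
        exact lt_of_le_of_ne (not_lt.mp this) (Ne.symm (hbW J hJ))
    exact hconv.isPreconnected.subset_connectedComponentIn haC hCsub hbC
end

section
/- Let g ≥ 0 and n ≥ 1 be integers and let S ⊆ {1,…,n} with |S| ≥ 2. Let p ∈ D_{g,n} satisfy Σ_{j∈S} p_j = 1 and Σ_{j∈J} p_j ≠ 1 for every subset J ≠ S with |J| ≥ 2. Then p lies in the closure of exactly two connected components C⁺ and C⁻ of U_{g,n}; these are characterized by Σ_{j∈S} a_j > 1 for all a ∈ C⁺ and Σ_{j∈S} a_j < 1 for all a ∈ C⁻; and for every J ≠ S with |J| ≥ 2 and all a ∈ C⁺, b ∈ C⁻, one has Σ_{j∈J} a_j < 1 if and only if Σ_{j∈J} b_j < 1. -/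
/-- A chamber: a connected component of `U_{g,n}`. -/
def IsChamber (g n : ℕ) (C : Set (Fin n → ℝ)) : Prop :=
  ∃ a ∈ hassettChamberSpace g n, C = connectedComponentIn (hassettChamberSpace g n) a

open Finset Set Topology Filter

section Aux

variable {n : ℕ}

lemma sumCont (J : Finset (Fin n)) : Continuous (fun a : Fin n → ℝ => ∑ j ∈ J, a j) :=
  continuous_finset_sum _ (fun j _ => continuous_apply j)

lemma combo_sum (J : Finset (Fin n)) (x y : Fin n → ℝ) (s t : ℝ) :
    ∑ j ∈ J, (s • x + t • y) j = s * ∑ j ∈ J, x j + t * ∑ j ∈ J, y j := by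
  simp [Finset.sum_add_distrib, Finset.mul_sum]

lemma combo_lt {A B s t : ℝ} (hA : A < 1) (hB : B < 1) (hs : 0 ≤ s) (ht : 0 ≤ t)
    (hst : s + t = 1) : s * A + t * B < 1 := by
  rcases hs.lt_or_eq with h | h
  · have h1 : s * A < s * 1 := mul_lt_mul_of_pos_left hA h
    have h2 : t * B ≤ t * 1 := mul_le_mul_of_nonneg_left hB.le ht
    nlinarith
  · have ht1 : t = 1 := by linarith
    rw [← h, ht1]; nlinarith

lemma combo_gt {A B s t : ℝ} (hA : 1 < A) (hB : 1 < B) (hs : 0 ≤ s) (ht : 0 ≤ t)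
    (hst : s + t = 1) : 1 < s * A + t * B := by
  rcases hs.lt_or_eq with h | h
  · have h1 : s * 1 < s * A := mul_lt_mul_of_pos_left hA h
    have h2 : t * 1 ≤ t * B := mul_le_mul_of_nonneg_left hB.le ht
    nlinarith
  · have ht1 : t = 1 := by linarith
    rw [← h, ht1]; nlinarith

lemma combo_le {A B s t : ℝ} (hA : A ≤ 1) (hB : B ≤ 1) (hs : 0 ≤ s) (ht : 0 ≤ t)
    (hst : s + t = 1) : s * A + t * B ≤ 1 := by nlinarith

lemma combo_gen {c A B s t : ℝ} (hA : c < A) (hB : c < B) (hs : 0 ≤ s) (ht : 0 ≤ t)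
    (hst : s + t = 1) : c < s * A + t * B := by
  rcases hs.lt_or_eq with h | h
  · have h1 : s * c < s * A := mul_lt_mul_of_pos_left hA h
    have h2 : t * c ≤ t * B := mul_le_mul_of_nonneg_left hB.le ht
    have h3 : s * c + t * c = c := by rw [← add_mul, hst, one_mul]
    linarith
  · have ht1 : t = 1 := by linarith
    rw [← h, ht1]; nlinarith

lemma combo_pos {A B s t : ℝ} (hA : 0 < A) (hB : 0 < B) (hs : 0 ≤ s) (ht : 0 ≤ t)
    (hst : s + t = 1) : 0 < s * A + t * B := by
  rcases hs.lt_or_eq with h | h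
  · have h1 : 0 < s * A := mul_pos h hA
    have h2 : 0 ≤ t * B := mul_nonneg ht hB.le
    linarith
  · have ht1 : t = 1 := by linarith
    rw [← h, ht1]; nlinarith

lemma sign_const {s : Set (Fin n → ℝ)} (hs : IsPreconnected s) (J : Finset (Fin n))
    (hne : ∀ a ∈ s, ∑ j ∈ J, a j ≠ 1) {a b : Fin n → ℝ} (ha : a ∈ s) (hb : b ∈ s) :
    (∑ j ∈ J, a j < 1 ↔ ∑ j ∈ J, b j < 1) := by
  have hcn : ContinuousOn (fun a : Fin n → ℝ => ∑ j ∈ J, a j) s := (sumCont J).continuousOn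
  constructor
  · intro h
    by_contra hcon
    have hgt : 1 < ∑ j ∈ J, b j := lt_of_le_of_ne (not_lt.mp hcon) (Ne.symm (hne b hb))
    obtain ⟨c, hcm, hc1⟩ := hs.intermediate_value ha hb hcn ⟨h.le, hgt.le⟩
    exact hne c hcm hc1
  · intro h
    by_contra hcon
    have hgt : 1 < ∑ j ∈ J, a j := lt_of_le_of_ne (not_lt.mp hcon) (Ne.symm (hne a ha))
    obtain ⟨c, hcm, hc1⟩ := hs.intermediate_value hb ha hcn ⟨h.le, hgt.le⟩
    exact hne c hcm hc1

lemma mem_chamberSpace {g n : ℕ} {a : Fin n → ℝ} :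
    a ∈ hassettChamberSpace g n ↔
      a ∈ hassettDomain g n ∧ ∀ J : Finset (Fin n), 2 ≤ J.card → ∑ j ∈ J, a j ≠ 1 := by
  simp only [hassettChamberSpace, Set.mem_diff, Set.mem_iUnion, hassettWall,
    Set.mem_setOf_eq, Set.mem_sep_iff, not_exists]
  constructor
  · rintro ⟨hD, hW⟩
    exact ⟨hD, fun J hJ h1 => hW J hJ ⟨hD, h1⟩⟩
  · rintro ⟨hD, hW⟩
    exact ⟨hD, fun J hJ h => hW J hJ h.2⟩

/-- The good open convex neighborhood of `p`. -/
def wallNbhd (g n : ℕ) (S : Finset (Fin n)) (p : Fin n → ℝ) : Set (Fin n → ℝ) :=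
  {a | (∀ j, 0 < a j) ∧ ((2 : ℝ) - 2 * g < ∑ j, a j) ∧
    ∀ J : Finset (Fin n), J ≠ S → 2 ≤ J.card →
      ((∑ j ∈ J, p j < 1 → ∑ j ∈ J, a j < 1) ∧ (1 < ∑ j ∈ J, p j → 1 < ∑ j ∈ J, a j))}

def Vplus (g n : ℕ) (S : Finset (Fin n)) (p : Fin n → ℝ) : Set (Fin n → ℝ) :=
  {a | a ∈ wallNbhd g n S p ∧ (∀ j, a j ≤ 1) ∧ 1 < ∑ j ∈ S, a j}

def Vminus (g n : ℕ) (S : Finset (Fin n)) (p : Fin n → ℝ) : Set (Fin n → ℝ) :=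
  {a | a ∈ wallNbhd g n S p ∧ (∀ j, a j ≤ 1) ∧ ∑ j ∈ S, a j < 1}

lemma wallNbhd_convex_part {g : ℕ} {S : Finset (Fin n)} {p x y : Fin n → ℝ}
    (hx : x ∈ wallNbhd g n S p) (hy : y ∈ wallNbhd g n S p) {s t : ℝ}
    (hs : 0 ≤ s) (ht : 0 ≤ t) (hst : s + t = 1) : s • x + t • y ∈ wallNbhd g n S p := by
  obtain ⟨hx1, hx2, hx3⟩ := hx
  obtain ⟨hy1, hy2, hy3⟩ := hy
  refine ⟨fun j => ?_, ?_, fun J hJS hJ2 => ⟨fun hlt => ?_, fun hgt => ?_⟩⟩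
  · simp only [Pi.add_apply, Pi.smul_apply, smul_eq_mul]
    exact combo_pos (hx1 j) (hy1 j) hs ht hst
  · rw [combo_sum]
    exact combo_gen hx2 hy2 hs ht hst
  · rw [combo_sum]
    exact combo_lt ((hx3 J hJS hJ2).1 hlt) ((hy3 J hJS hJ2).1 hlt) hs ht hst
  · rw [combo_sum]
    exact combo_gt ((hx3 J hJS hJ2).2 hgt) ((hy3 J hJS hJ2).2 hgt) hs ht hst

end Aux

section Main

variable {g n : ℕ} {S : Finset (Fin n)} {p : Fin n → ℝ}

lemma Vplus_convex : Convex ℝ (Vplus g n S p) := by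
  rintro x ⟨hxO, hxle, hxS⟩ y ⟨hyO, hyle, hyS⟩ s t hs ht hst
  refine ⟨wallNbhd_convex_part hxO hyO hs ht hst, fun j => ?_, ?_⟩
  · simp only [Pi.add_apply, Pi.smul_apply, smul_eq_mul]
    exact combo_le (hxle j) (hyle j) hs ht hst
  · rw [combo_sum]
    exact combo_gt hxS hyS hs ht hst

lemma Vminus_convex : Convex ℝ (Vminus g n S p) := by
  rintro x ⟨hxO, hxle, hxS⟩ y ⟨hyO, hyle, hyS⟩ s t hs ht hst
  refine ⟨wallNbhd_convex_part hxO hyO hs ht hst, fun j => ?_, ?_⟩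
  · simp only [Pi.add_apply, Pi.smul_apply, smul_eq_mul]
    exact combo_le (hxle j) (hyle j) hs ht hst
  · rw [combo_sum]
    exact combo_lt hxS hyS hs ht hst

lemma wallNbhd_ne (hpJ : ∀ J : Finset (Fin n), J ≠ S → 2 ≤ J.card → ∑ j ∈ J, p j ≠ 1)
    {a : Fin n → ℝ} (ha : a ∈ wallNbhd g n S p) {J : Finset (Fin n)} (hJS : J ≠ S)
    (hJ2 : 2 ≤ J.card) : ∑ j ∈ J, a j ≠ 1 := by
  rcases lt_or_gt_of_ne (hpJ J hJS hJ2) with h | h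
  · exact ne_of_lt ((ha.2.2 J hJS hJ2).1 h)
  · exact ne_of_gt ((ha.2.2 J hJS hJ2).2 h)

lemma wallNbhd_sign (hpJ : ∀ J : Finset (Fin n), J ≠ S → 2 ≤ J.card → ∑ j ∈ J, p j ≠ 1)
    {a : Fin n → ℝ} (ha : a ∈ wallNbhd g n S p) {J : Finset (Fin n)} (hJS : J ≠ S)
    (hJ2 : 2 ≤ J.card) : (∑ j ∈ J, a j < 1 ↔ ∑ j ∈ J, p j < 1) := by
  rcases lt_or_gt_of_ne (hpJ J hJS hJ2) with h | h
  · exact ⟨fun _ => h, fun _ => (ha.2.2 J hJS hJ2).1 h⟩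
  · exact ⟨fun hlt => absurd ((ha.2.2 J hJS hJ2).2 h) (not_lt.mpr hlt.le), fun hlt => absurd h (not_lt.mpr hlt.le)⟩

lemma Vplus_subset (hpJ : ∀ J : Finset (Fin n), J ≠ S → 2 ≤ J.card → ∑ j ∈ J, p j ≠ 1) :
    Vplus g n S p ⊆ hassettChamberSpace g n := by
  rintro a ⟨haO, hale, haS⟩
  rw [mem_chamberSpace]
  refine ⟨⟨fun j => ⟨haO.1 j, hale j⟩, haO.2.1⟩, fun J hJ2 => ?_⟩
  by_cases hJS : J = S
  · subst hJS; exact ne_of_gt haS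
  · exact wallNbhd_ne hpJ haO hJS hJ2

lemma Vminus_subset (hpJ : ∀ J : Finset (Fin n), J ≠ S → 2 ≤ J.card → ∑ j ∈ J, p j ≠ 1) :
    Vminus g n S p ⊆ hassettChamberSpace g n := by
  rintro a ⟨haO, hale, haS⟩
  rw [mem_chamberSpace]
  refine ⟨⟨fun j => ⟨haO.1 j, hale j⟩, haO.2.1⟩, fun J hJ2 => ?_⟩
  by_cases hJS : J = S
  · subst hJS; exact ne_of_lt haS
  · exact wallNbhd_ne hpJ haO hJS hJ2

lemma wallNbhd_mem_nhds (hp : p ∈ hassettDomain g n)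
    (hpJ : ∀ J : Finset (Fin n), J ≠ S → 2 ≤ J.card → ∑ j ∈ J, p j ≠ 1) :
    wallNbhd g n S p ∈ 𝓝 p := by
  have h1 : ∀ᶠ a : Fin n → ℝ in 𝓝 p, ∀ j, 0 < a j :=
    eventually_all.mpr fun j =>
      Filter.Tendsto.eventually_const_lt (hp.1 j).1 ((continuous_apply j).tendsto p)
  have h2 : ∀ᶠ a : Fin n → ℝ in 𝓝 p, (2 : ℝ) - 2 * g < ∑ j, a j :=
    Filter.Tendsto.eventually_const_lt hp.2 ((sumCont Finset.univ).tendsto p)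
  have h3 : ∀ᶠ a : Fin n → ℝ in 𝓝 p, ∀ J : Finset (Fin n), J ≠ S → 2 ≤ J.card →
      ((∑ j ∈ J, p j < 1 → ∑ j ∈ J, a j < 1) ∧ (1 < ∑ j ∈ J, p j → 1 < ∑ j ∈ J, a j)) := by
    refine eventually_all.mpr fun J => ?_
    by_cases hJS : J = S
    · exact Filter.Eventually.of_forall fun a hne => absurd hJS hne
    · by_cases hJ2 : 2 ≤ J.card
      · rcases lt_or_gt_of_ne (hpJ J hJS hJ2) with h | h
        · refine (Filter.Tendsto.eventually_lt_const h ((sumCont J).tendsto p)).mono ?_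
          intro a ha _ _
          exact ⟨fun _ => ha, fun hgt => absurd hgt (not_lt.mpr h.le)⟩
        · refine (Filter.Tendsto.eventually_const_lt h ((sumCont J).tendsto p)).mono ?_
          intro a ha _ _
          exact ⟨fun hlt => absurd hlt (not_lt.mpr h.le), fun _ => ha⟩
      · exact Filter.Eventually.of_forall fun a _ h2c => absurd h2c hJ2
  filter_upwards [h1, h2, h3] with a ha1 ha2 ha3
  exact ⟨ha1, ha2, ha3⟩

/-- The perturbation path. -/
def pert (S : Finset (Fin n)) (p : Fin n → ℝ) (s : ℝ) : Fin n → ℝ :=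
  fun j => p j + if j ∈ S then s else 0

lemma pert_continuous : Continuous (pert S p) := by
  apply continuous_pi
  intro j
  by_cases hj : j ∈ S
  · simp only [pert, if_pos hj]
    exact continuous_const.add continuous_id
  · simpa [pert, hj] using (continuous_const : Continuous fun _ : ℝ => p j)

lemma pert_zero : pert S p 0 = p := by
  funext j; simp [pert]

lemma pert_sum_S (hpS : ∑ j ∈ S, p j = 1) (s : ℝ) :
    ∑ j ∈ S, pert S p s j = 1 + S.card * s := by
  unfold pert
  rw [Finset.sum_add_distrib, hpS]
  congr 1
  rw [Finset.sum_congr rfl (fun j hj => if_pos hj), Finset.sum_const, nsmul_eq_mul]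

end Main

theorem stmt3 (g n : ℕ) (hn : 1 ≤ n)
    (S : Finset (Fin n)) (hS : 2 ≤ S.card)
    (p : Fin n → ℝ) (hp : p ∈ hassettDomain g n)
    (hpS : ∑ j ∈ S, p j = 1)
    (hpJ : ∀ J : Finset (Fin n), J ≠ S → 2 ≤ J.card → ∑ j ∈ J, p j ≠ 1) :
    ∃ Cp Cm : Set (Fin n → ℝ),
      Cp ≠ Cm ∧
      IsChamber g n Cp ∧ IsChamber g n Cm ∧
      p ∈ closure Cp ∧ p ∈ closure Cm ∧
      (∀ C : Set (Fin n → ℝ), IsChamber g n C → p ∈ closure C → C = Cp ∨ C = Cm) ∧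
      (∀ a ∈ Cp, 1 < ∑ j ∈ S, a j) ∧
      (∀ a ∈ Cm, ∑ j ∈ S, a j < 1) ∧
      (∀ J : Finset (Fin n), J ≠ S → 2 ≤ J.card →
        ∀ a ∈ Cp, ∀ b ∈ Cm, ((∑ j ∈ J, a j < 1) ↔ (∑ j ∈ J, b j < 1))) := by
  have hO : wallNbhd g n S p ∈ 𝓝 p := wallNbhd_mem_nhds hp hpJ
  obtain ⟨δ, hδ, hball⟩ := Metric.mem_nhds_iff.mp
    ((pert_continuous (S := S) (p := p)).continuousAt.preimage_mem_nhds (by rw [pert_zero]; exact hO))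
  have hOf : ∀ s : ℝ, |s| < δ → pert S p s ∈ wallNbhd g n S p := fun s hs =>
    hball (show s ∈ Metric.ball 0 δ by simpa [Real.dist_eq] using hs)
  -- p j < 1 for j ∈ S
  have hplt : ∀ j ∈ S, p j < 1 := by
    intro j hj
    have hne : (S.erase j).Nonempty :=
      Finset.card_pos.mp (by rw [Finset.card_erase_of_mem hj]; omega)
    have hpos : 0 < ∑ k ∈ S.erase j, p k := Finset.sum_pos (fun k _ => (hp.1 k).1) hne
    have heq : p j + ∑ k ∈ S.erase j, p k = 1 := by rw [Finset.add_sum_erase S p hj, hpS]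
    linarith
  have hSne : S.Nonempty := Finset.card_pos.mp (by omega)
  have cardpos : (0 : ℝ) < S.card := by
    have : 0 < S.card := by omega
    exact_mod_cast this
  set m := S.inf' hSne (fun j => 1 - p j) with hm_def
  have hm : 0 < m := by
    rw [hm_def, Finset.lt_inf'_iff]
    exact fun j hj => sub_pos.mpr (hplt j hj)
  set t := min (δ / 2) m with ht_def
  have ht : 0 < t := lt_min (by linarith) hm
  have htδ : t < δ := lt_of_le_of_lt (min_le_left _ _) (by linarith)
  have htm : ∀ j ∈ S, p j + t ≤ 1 := by
    intro j hj
    have h1 : t ≤ 1 - p j := le_trans (min_le_right _ _) (Finset.inf'_le _ hj)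
    linarith
  have hfle : ∀ s : ℝ, s ≤ t → ∀ j, pert S p s j ≤ 1 := by
    intro s hs j
    by_cases hj : j ∈ S
    · have := htm j hj
      simp only [pert, if_pos hj]
      linarith
    · simp only [pert, if_neg hj, add_zero]
      exact (hp.1 j).2
  -- the two base points
  have haplusV : pert S p t ∈ Vplus g n S p := by
    refine ⟨hOf t (by rw [abs_of_pos ht]; exact htδ), hfle t le_rfl, ?_⟩
    rw [pert_sum_S hpS]
    nlinarith [mul_pos cardpos ht]
  have haminusV : pert S p (-t) ∈ Vminus g n S p := by
    refine ⟨hOf (-t) (by rw [abs_neg, abs_of_pos ht]; exact htδ), hfle (-t) (by linarith), ?_⟩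
    rw [pert_sum_S hpS]
    nlinarith [mul_pos cardpos ht]
  have haplusU : pert S p t ∈ hassettChamberSpace g n := Vplus_subset hpJ haplusV
  have haminusU : pert S p (-t) ∈ hassettChamberSpace g n := Vminus_subset hpJ haminusV
  set U := hassettChamberSpace g n with hU_def
  set Cp := connectedComponentIn U (pert S p t) with hCp_def
  set Cm := connectedComponentIn U (pert S p (-t)) with hCm_def
  have hCpU : Cp ⊆ U := connectedComponentIn_subset _ _
  have hCmU : Cm ⊆ U := connectedComponentIn_subset _ _
  have hUne : ∀ a ∈ U, ∀ J : Finset (Fin n), 2 ≤ J.card → ∑ j ∈ J, a j ≠ 1 :=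
    fun a ha => (mem_chamberSpace.mp ha).2
  have haplusCp : pert S p t ∈ Cp := mem_connectedComponentIn haplusU
  have haminusCm : pert S p (-t) ∈ Cm := mem_connectedComponentIn haminusU
  -- sign facts on the chambers
  have hCp_gt : ∀ a ∈ Cp, 1 < ∑ j ∈ S, a j := by
    intro a ha
    have hiff := sign_const isPreconnected_connectedComponentIn S
      (fun b hb => hUne b (hCpU hb) S hS) ha haplusCp
    have h2 := hUne a (hCpU ha) S hS
    have h3 : ¬ (∑ j ∈ S, pert S p t j < 1) := not_lt.mpr haplusV.2.2.le
    exact lt_of_le_of_ne (not_lt.mp (fun h => h3 (hiff.mp h))) (Ne.symm h2)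
  have hCm_lt : ∀ a ∈ Cm, ∑ j ∈ S, a j < 1 := by
    intro a ha
    have hiff := sign_const isPreconnected_connectedComponentIn S
      (fun b hb => hUne b (hCmU hb) S hS) ha haminusCm
    exact hiff.mpr haminusV.2.2
  have hCp_sign : ∀ J : Finset (Fin n), J ≠ S → 2 ≤ J.card → ∀ a ∈ Cp,
      (∑ j ∈ J, a j < 1 ↔ ∑ j ∈ J, p j < 1) := by
    intro J hJS hJ2 a ha
    have hiff := sign_const isPreconnected_connectedComponentIn J
      (fun b hb => hUne b (hCpU hb) J hJ2) ha haplusCp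
    exact hiff.trans (wallNbhd_sign hpJ haplusV.1 hJS hJ2)
  have hCm_sign : ∀ J : Finset (Fin n), J ≠ S → 2 ≤ J.card → ∀ a ∈ Cm,
      (∑ j ∈ J, a j < 1 ↔ ∑ j ∈ J, p j < 1) := by
    intro J hJS hJ2 a ha
    have hiff := sign_const isPreconnected_connectedComponentIn J
      (fun b hb => hUne b (hCmU hb) J hJ2) ha haminusCm
    exact hiff.trans (wallNbhd_sign hpJ haminusV.1 hJS hJ2)
  -- closures
  have hpclP : p ∈ closure Cp := by
    have hsegV : pert S p '' Ioc 0 t ⊆ Vplus g n S p := by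
      rintro _ ⟨s, ⟨hs0, hst⟩, rfl⟩
      refine ⟨hOf s (by rw [abs_of_pos hs0]; linarith), hfle s hst, ?_⟩
      rw [pert_sum_S hpS]
      nlinarith [mul_pos cardpos hs0]
    have hsegCp : pert S p '' Ioc 0 t ⊆ Cp :=
      (isPreconnected_Ioc.image _ pert_continuous.continuousOn).subset_connectedComponentIn
        ⟨t, ⟨ht, le_rfl⟩, rfl⟩ (hsegV.trans (Vplus_subset hpJ))
    have h0 : p ∈ pert S p '' closure (Ioc 0 t) :=
      ⟨0, by rw [closure_Ioc ht.ne]; exact ⟨le_rfl, ht.le⟩, pert_zero⟩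
    exact closure_mono hsegCp (image_closure_subset_closure_image pert_continuous h0)
  have hpclM : p ∈ closure Cm := by
    have hsegV : pert S p '' Ico (-t) 0 ⊆ Vminus g n S p := by
      rintro _ ⟨s, ⟨hs0, hst⟩, rfl⟩
      refine ⟨hOf s (by rw [abs_of_neg hst]; linarith), hfle s (by linarith), ?_⟩
      rw [pert_sum_S hpS]
      nlinarith [mul_neg_of_pos_of_neg cardpos hst]
    have hsegCm : pert S p '' Ico (-t) 0 ⊆ Cm :=
      (isPreconnected_Ico.image _ pert_continuous.continuousOn).subset_connectedComponentIn
        ⟨-t, ⟨le_rfl, by linarith⟩, rfl⟩ (hsegV.trans (Vminus_subset hpJ))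
    have h0 : p ∈ pert S p '' closure (Ico (-t) 0) :=
      ⟨0, by rw [closure_Ico (show (-t : ℝ) ≠ 0 by linarith)]; exact ⟨by linarith, le_rfl⟩,
        pert_zero⟩
    exact closure_mono hsegCm (image_closure_subset_closure_image pert_continuous h0)
  refine ⟨Cp, Cm, ?_, ⟨_, haplusU, rfl⟩, ⟨_, haminusU, rfl⟩, hpclP, hpclM, ?_, hCp_gt, hCm_lt, ?_⟩
  · intro h
    have := hCm_lt (pert S p t) (h ▸ haplusCp)
    exact absurd this (not_lt.mpr haplusV.2.2.le)
  · rintro C ⟨c, hcU, rfl⟩ hpc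
    obtain ⟨a, haO, haC⟩ := mem_closure_iff_nhds.mp hpc _ hO
    have haU : a ∈ U := connectedComponentIn_subset _ _ haC
    have hale : ∀ j, a j ≤ 1 := fun j => ((mem_chamberSpace.mp haU).1.1 j).2
    have hane := (mem_chamberSpace.mp haU).2 S hS
    rcases lt_or_gt_of_ne hane with h | h
    · right
      have haV : a ∈ Vminus g n S p := ⟨haO, hale, h⟩
      have hsub : Vminus g n S p ⊆ connectedComponentIn U a :=
        (Vminus_convex.isPreconnected).subset_connectedComponentIn haV (Vminus_subset hpJ)
      rw [connectedComponentIn_eq haC, connectedComponentIn_eq (hsub haminusV)]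
    · left
      have haV : a ∈ Vplus g n S p := ⟨haO, hale, h⟩
      have hsub : Vplus g n S p ⊆ connectedComponentIn U a :=
        (Vplus_convex.isPreconnected).subset_connectedComponentIn haV (Vplus_subset hpJ)
      rw [connectedComponentIn_eq haC, connectedComponentIn_eq (hsub haplusV)]
  · intro J hJS hJ2 a ha b hb
    exact (hCp_sign J hJS hJ2 a ha).trans (hCm_sign J hJS hJ2 b hb).symm
end
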